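/- Let L = D^{-1/2} Π Θ' with Θ = ρ B, where D is diagonal with entries in [τ+δ_min, τ+δ_max], Π ∈ ℝ^{N×K} and B ∈ ℝ^{J×K} both have rank K. Then the nonzero eigenvalues of L L' satisfy ρ² λ_K(Π'Π) λ_K(B'B)/(τ+δ_max) ≤ λ_K(LL') ≤ λ₁(LL') ≤ ρ² λ₁(Π'Π) λ₁(B'B)/(τ+δ_min). -/

import Mathlib

open Matrix


lemma hasEig_iff {n : ℕ} (M : Matrix (Fin n) (Fin n) ℝ) (μ : ℝ) :
    Module.End.HasEigenvalue (Matrix.toLin' M) μ ↔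
      ∃ v : Fin n → ℝ, v ≠ 0 ∧ M *ᵥ v = μ • v := by
  constructor
  · intro h
    obtain ⟨v, hv, hv0⟩ := h.exists_hasEigenvector
    rw [Module.End.mem_eigenspace_iff] at hv
    exact ⟨v, hv0, by simpa [Matrix.toLin'_apply] using hv⟩
  · rintro ⟨v, hv0, hv⟩
    exact Module.End.hasEigenvalue_of_hasEigenvector
      ⟨Module.End.mem_eigenspace_iff.mpr (by simpa [Matrix.toLin'_apply] using hv), hv0⟩

lemma inner_eq_dot {n : ℕ} (x y : EuclideanSpace ℝ (Fin n)) :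
    (inner ℝ x y : ℝ) = (x : Fin n → ℝ) ⬝ᵥ (y : Fin n → ℝ) := by
  simp [PiLp.inner_apply, dotProduct, RCLike.inner_apply, mul_comm]
lemma repr3 {n : ℕ} {M : Matrix (Fin n) (Fin n) ℝ} (hM : M.IsHermitian) (v : Fin n → ℝ) :
    (v ⬝ᵥ v = ∑ i, ((hM.eigenvectorBasis i : Fin n → ℝ) ⬝ᵥ v) ^ 2) ∧
    (M *ᵥ v ⬝ᵥ v = ∑ i, hM.eigenvalues i * ((hM.eigenvectorBasis i : Fin n → ℝ) ⬝ᵥ v) ^ 2) ∧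
    ((M *ᵥ v) ⬝ᵥ (M *ᵥ v) =
      ∑ i, hM.eigenvalues i ^ 2 * ((hM.eigenvectorBasis i : Fin n → ℝ) ⬝ᵥ v) ^ 2) := by
  set b := hM.eigenvectorBasis with hb
  set e : (Fin n → ℝ) ≃ EuclideanSpace ℝ (Fin n) := (WithLp.equiv 2 (Fin n → ℝ)).symm with he
  have hMt : Mᵀ = M := by
    have := hM.eq; rwa [Matrix.conjTranspose_eq_transpose_of_trivial] at this
  have key : ∀ i, M *ᵥ (b i : Fin n → ℝ) = hM.eigenvalues i • (b i : Fin n → ℝ) :=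
    fun i => hM.mulVec_eigenvectorBasis i
  have hMb : ∀ i, (b i : Fin n → ℝ) ⬝ᵥ (M *ᵥ v)
      = hM.eigenvalues i * ((b i : Fin n → ℝ) ⬝ᵥ v) := by
    intro i
    rw [dotProduct_mulVec, ← mulVec_transpose, hMt, key i, smul_dotProduct]
    rfl
  have hbv : ∀ (x : Fin n → ℝ) i, (inner ℝ (e x) (b i) : ℝ) = (b i : Fin n → ℝ) ⬝ᵥ x := by
    intro x i; rw [inner_eq_dot]; exact dotProduct_comm _ _
  have hvb : ∀ (x : Fin n → ℝ) i, (inner ℝ (b i) (e x) : ℝ) = (b i : Fin n → ℝ) ⬝ᵥ x :=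
    fun x i => inner_eq_dot _ _
  refine ⟨?_, ?_, ?_⟩
  · have := b.sum_inner_mul_inner (e v) (e v)
    rw [inner_eq_dot (e v) (e v)] at this
    rw [show v ⬝ᵥ v = (e v : Fin n → ℝ) ⬝ᵥ (e v : Fin n → ℝ) from rfl, ← this]
    exact Finset.sum_congr rfl fun i _ => by rw [hbv v i, hvb v i, sq]
  · have := b.sum_inner_mul_inner (e v) (e (M *ᵥ v))
    rw [inner_eq_dot] at this
    have h2 : M *ᵥ v ⬝ᵥ v = (e v : Fin n → ℝ) ⬝ᵥ (e (M *ᵥ v) : Fin n → ℝ) :=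
      dotProduct_comm _ _
    rw [h2, ← this]
    exact Finset.sum_congr rfl fun i _ => by
      rw [hbv v i, hvb (M *ᵥ v) i, hMb i]; ring
  · have := b.sum_inner_mul_inner (e (M *ᵥ v)) (e (M *ᵥ v))
    rw [inner_eq_dot] at this
    rw [show (M *ᵥ v) ⬝ᵥ (M *ᵥ v)
        = (e (M *ᵥ v) : Fin n → ℝ) ⬝ᵥ (e (M *ᵥ v) : Fin n → ℝ) from rfl, ← this]
    exact Finset.sum_congr rfl fun i _ => by
      rw [hbv (M *ᵥ v) i, hvb (M *ᵥ v) i, hMb i]; ring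

lemma eigenvalues_hasEig {n : ℕ} {M : Matrix (Fin n) (Fin n) ℝ} (hM : M.IsHermitian) (i : Fin n) :
    Module.End.HasEigenvalue (Matrix.toLin' M) (hM.eigenvalues i) := by
  rw [hasEig_iff]
  refine ⟨(hM.eigenvectorBasis i : Fin n → ℝ), ?_, hM.mulVec_eigenvectorBasis i⟩
  intro h
  have := hM.eigenvectorBasis.orthonormal.ne_zero i
  apply this
  ext j
  exact congrFun h j

lemma quad_le {n : ℕ} {M : Matrix (Fin n) (Fin n) ℝ} (hM : M.IsHermitian) {lam : ℝ}
    (hub : ∀ μ : ℝ, Module.End.HasEigenvalue (Matrix.toLin' M) μ → μ ≤ lam)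
    (v : Fin n → ℝ) : M *ᵥ v ⬝ᵥ v ≤ lam * (v ⬝ᵥ v) := by
  obtain ⟨h1, h2, -⟩ := repr3 hM v
  rw [h1, h2, Finset.mul_sum]
  exact Finset.sum_le_sum fun i _ =>
    mul_le_mul_of_nonneg_right (hub _ (eigenvalues_hasEig hM i)) (sq_nonneg _)

lemma quad_ge {n : ℕ} {M : Matrix (Fin n) (Fin n) ℝ} (hM : M.IsHermitian) {lam : ℝ}
    (hlb : ∀ μ : ℝ, Module.End.HasEigenvalue (Matrix.toLin' M) μ → lam ≤ μ)
    (v : Fin n → ℝ) : lam * (v ⬝ᵥ v) ≤ M *ᵥ v ⬝ᵥ v := by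
  obtain ⟨h1, h2, -⟩ := repr3 hM v
  rw [h1, h2, Finset.mul_sum]
  exact Finset.sum_le_sum fun i _ =>
    mul_le_mul_of_nonneg_right (hlb _ (eigenvalues_hasEig hM i)) (sq_nonneg _)

lemma quad_sq_ge {n : ℕ} {M : Matrix (Fin n) (Fin n) ℝ} (hM : M.IsHermitian) {lam : ℝ}
    (hlam : 0 ≤ lam)
    (hlb : ∀ μ : ℝ, Module.End.HasEigenvalue (Matrix.toLin' M) μ → lam ≤ μ)
    (v : Fin n → ℝ) : lam * (M *ᵥ v ⬝ᵥ v) ≤ (M *ᵥ v) ⬝ᵥ (M *ᵥ v) := by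
  obtain ⟨-, h2, h3⟩ := repr3 hM v
  rw [h2, h3, Finset.mul_sum]
  refine Finset.sum_le_sum fun i _ => ?_
  have hμ := hlb _ (eigenvalues_hasEig hM i)
  have : lam * hM.eigenvalues i ≤ hM.eigenvalues i ^ 2 := by nlinarith
  calc lam * (hM.eigenvalues i * ((hM.eigenvectorBasis i : Fin n → ℝ) ⬝ᵥ v) ^ 2)
      = lam * hM.eigenvalues i * ((hM.eigenvectorBasis i : Fin n → ℝ) ⬝ᵥ v) ^ 2 := by ring
    _ ≤ hM.eigenvalues i ^ 2 * ((hM.eigenvectorBasis i : Fin n → ℝ) ⬝ᵥ v) ^ 2 :=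
        mul_le_mul_of_nonneg_right this (sq_nonneg _)

lemma eig_transfer {m n : ℕ} (A : Matrix (Fin m) (Fin n) ℝ) {μ : ℝ} (hμ : μ ≠ 0)
    (h : Module.End.HasEigenvalue (Matrix.toLin' (A * Aᵀ)) μ) :
    Module.End.HasEigenvalue (Matrix.toLin' (Aᵀ * A)) μ := by
  rw [hasEig_iff] at h ⊢
  obtain ⟨w, hw0, hw⟩ := h
  refine ⟨Aᵀ *ᵥ w, ?_, ?_⟩
  · intro hz
    apply hw0
    have h0 : (A * Aᵀ) *ᵥ w = 0 := by rw [← mulVec_mulVec, hz, mulVec_zero]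
    rw [hw] at h0
    have := congrArg (fun x => μ⁻¹ • x) h0
    simpa [smul_smul, inv_mul_cancel₀ hμ] using this
  · calc (Aᵀ * A) *ᵥ (Aᵀ *ᵥ w) = Aᵀ *ᵥ ((A * Aᵀ) *ᵥ w) := by
          rw [mulVec_mulVec, mulVec_mulVec, Matrix.mul_assoc]
      _ = μ • (Aᵀ *ᵥ w) := by rw [hw, mulVec_smul]

lemma dot_self_pos {n : ℕ} {v : Fin n → ℝ} (hv : v ≠ 0) : 0 < v ⬝ᵥ v := by
  rcases lt_or_eq_of_le (Finset.sum_nonneg fun i _ => mul_self_nonneg (v i) :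
      (0:ℝ) ≤ v ⬝ᵥ v) with h | h
  · exact h
  · exact absurd (dotProduct_self_eq_zero.mp h.symm) hv

lemma dot_sandwich {m n : ℕ} (A : Matrix (Fin m) (Fin n) ℝ) (v : Fin n → ℝ) :
    (Aᵀ * A) *ᵥ v ⬝ᵥ v = (A *ᵥ v) ⬝ᵥ (A *ᵥ v) := by
  rw [← mulVec_mulVec, dotProduct_comm, dotProduct_mulVec, vecMul_transpose]

lemma rank_inj {m n : ℕ} (A : Matrix (Fin m) (Fin n) ℝ) (h : A.rank = n)
    {v : Fin n → ℝ} (hv : A *ᵥ v = 0) : v = 0 := by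
  have hrn := A.mulVecLin.finrank_range_add_finrank_ker
  rw [Module.finrank_fin_fun] at hrn
  rw [Matrix.rank] at h
  have hker : Module.finrank ℝ (LinearMap.ker A.mulVecLin) = 0 := by omega
  have : LinearMap.ker A.mulVecLin = ⊥ := Submodule.finrank_eq_zero.mp hker
  have hmem : v ∈ LinearMap.ker A.mulVecLin := by
    rw [LinearMap.mem_ker, Matrix.mulVecLin_apply]; exact hv
  rw [this, Submodule.mem_bot] at hmem
  exact hmem

lemma pos_eig {m n : ℕ} (A : Matrix (Fin m) (Fin n) ℝ) (h : A.rank = n) {μ : ℝ}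
    (hμ : Module.End.HasEigenvalue (Matrix.toLin' (Aᵀ * A)) μ) : 0 < μ := by
  rw [hasEig_iff] at hμ
  obtain ⟨v, hv0, hv⟩ := hμ
  have h1 : μ * (v ⬝ᵥ v) = (A *ᵥ v) ⬝ᵥ (A *ᵥ v) := by
    rw [← dot_sandwich, hv, smul_dotProduct]; rfl
  have hAv : A *ᵥ v ≠ 0 := fun hz => hv0 (rank_inj A h hz)
  have h2 : 0 < μ * (v ⬝ᵥ v) := h1 ▸ dot_self_pos hAv
  have h3 : 0 < v ⬝ᵥ v := dot_self_pos hv0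
  nlinarith


/-- the nonzero eigenvalues of `L Lᵀ` with `L = ρ D^{-1/2} Π Bᵀ`
lie in `[ρ² λ_K(ΠᵀΠ) λ_K(BᵀB)/(τ+δmax), ρ² λ₁(ΠᵀΠ) λ₁(BᵀB)/(τ+δmin)]`. -/
theorem laplacian_eigenvalue_bounds {N J K : ℕ}
    (ρ τ δmin δmax : ℝ) (hρ : 0 < ρ) (hτ : 0 ≤ τ) (hδmin : 0 < δmin)
    (hδ : δmin ≤ δmax)
    (d : Fin N → ℝ) (hd : ∀ i, τ + δmin ≤ d i ∧ d i ≤ τ + δmax)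
    (Pm : Matrix (Fin N) (Fin K) ℝ) (B : Matrix (Fin J) (Fin K) ℝ)
    (hPrank : Pm.rank = K) (hBrank : B.rank = K)
    (L : Matrix (Fin N) (Fin J) ℝ)
    (hL : L = ρ • (Matrix.diagonal (fun i => (Real.sqrt (d i))⁻¹) * Pm * Bᵀ))
    (lam1P lamKP lam1B lamKB : ℝ)
    (hlam1P : IsGreatest {μ : ℝ |
      Module.End.HasEigenvalue (Matrix.toLin' (Pmᵀ * Pm)) μ} lam1P)
    (hlamKP : IsLeast {μ : ℝ |
      Module.End.HasEigenvalue (Matrix.toLin' (Pmᵀ * Pm)) μ} lamKP)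
    (hlam1B : IsGreatest {μ : ℝ |
      Module.End.HasEigenvalue (Matrix.toLin' (Bᵀ * B)) μ} lam1B)
    (hlamKB : IsLeast {μ : ℝ |
      Module.End.HasEigenvalue (Matrix.toLin' (Bᵀ * B)) μ} lamKB) :
    ∀ μ : ℝ, Module.End.HasEigenvalue (Matrix.toLin' (L * Lᵀ)) μ → μ ≠ 0 →
      ρ ^ 2 * lamKP * lamKB / (τ + δmax) ≤ μ ∧
      μ ≤ ρ ^ 2 * lam1P * lam1B / (τ + δmin) := by
  intro μ hμeig hμ0
  -- basic positivity
  have hτδmin : 0 < τ + δmin := by linarith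
  have hτδmax : 0 < τ + δmax := by linarith
  have hdpos : ∀ i, 0 < d i := fun i => lt_of_lt_of_le hτδmin (hd i).1
  set s : Fin N → ℝ := fun i => (Real.sqrt (d i))⁻¹ with hs
  have hs2 : ∀ i, s i * s i = (d i)⁻¹ := by
    intro i
    rw [hs]
    rw [← mul_inv, Real.mul_self_sqrt (hdpos i).le]
  -- hermitian matrices
  have hPP : (Pmᵀ * Pm).IsHermitian := by
    rw [← Matrix.conjTranspose_eq_transpose_of_trivial]
    exact Matrix.isHermitian_conjTranspose_mul_self Pm
  have hBB : (Bᵀ * B).IsHermitian := by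
    rw [← Matrix.conjTranspose_eq_transpose_of_trivial]
    exact Matrix.isHermitian_conjTranspose_mul_self B
  have hPPt : (Pm * Pmᵀ).IsHermitian := by
    have := Matrix.isHermitian_conjTranspose_mul_self Pmᵀ
    rwa [Matrix.conjTranspose_eq_transpose_of_trivial, Matrix.transpose_transpose] at this
  -- positivity of extreme eigenvalues
  have hlamKPpos : 0 < lamKP := pos_eig Pm hPrank hlamKP.1
  have hlam1Ppos : 0 < lam1P := pos_eig Pm hPrank hlam1P.1
  have hlamKBpos : 0 < lamKB := pos_eig B hBrank hlamKB.1
  have hlam1Bpos : 0 < lam1B := pos_eig B hBrank hlam1B.1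
  -- eigenvector of L Lᵀ
  obtain ⟨v, hv0, hv⟩ := (hasEig_iff (L * Lᵀ) μ).mp hμeig
  set Dm : Matrix (Fin N) (Fin N) ℝ := Matrix.diagonal s with hDm
  have hLT : Lᵀ = ρ • (B * Pmᵀ * Dm) := by
    rw [hL]
    simp only [Matrix.transpose_smul, Matrix.transpose_mul, Matrix.transpose_transpose,
      Matrix.mul_assoc]
    rw [show Dmᵀ = Dm from by rw [hDm, Matrix.diagonal_transpose]]
  set y : Fin N → ℝ := Dm *ᵥ v with hy
  set a : Fin K → ℝ := Pmᵀ *ᵥ y with ha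
  set w : Fin J → ℝ := Lᵀ *ᵥ v with hwdef
  have hw : w = ρ • (B *ᵥ a) := by
    rw [hwdef, hLT, Matrix.smul_mulVec, ← Matrix.mulVec_mulVec, ← Matrix.mulVec_mulVec]
  have hsmulsq : ∀ {k : ℕ} (c : ℝ) (x : Fin k → ℝ), (c • x) ⬝ᵥ (c • x) = c ^ 2 * (x ⬝ᵥ x) := by
    intro k c x
    rw [smul_dotProduct, dotProduct_smul, smul_eq_mul, smul_eq_mul]; ring
  have hvv : 0 < v ⬝ᵥ v := dot_self_pos hv0
  -- μ * (v⬝v) = w ⬝ w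
  have hmain : μ * (v ⬝ᵥ v) = w ⬝ᵥ w := by
    have h1 := dot_sandwich Lᵀ v
    rw [Matrix.transpose_transpose] at h1
    rw [← hwdef] at h1
    rw [← h1, hv, smul_dotProduct, smul_eq_mul]
  -- diagonal quadratic forms
  have hdiag : ∀ (x : Fin N → ℝ), (Dm *ᵥ x) ⬝ᵥ (Dm *ᵥ x) = ∑ i, (d i)⁻¹ * (x i * x i) := by
    intro x
    unfold dotProduct
    refine Finset.sum_congr rfl fun i _ => ?_
    rw [hDm, Matrix.mulVec_diagonal, ← hs2 i]; ring
  constructor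
  · -- LOWER BOUND
    have hw0 : w ≠ 0 := by
      intro hz
      have : (L * Lᵀ) *ᵥ v = 0 := by
        rw [← Matrix.mulVec_mulVec, ← hwdef, hz, Matrix.mulVec_zero]
      rw [hv] at this
      exact hv0 ((smul_eq_zero.mp this).resolve_left hμ0)
    have hww : 0 < w ⬝ᵥ w := dot_self_pos hw0
    set z : Fin K → ℝ := Bᵀ *ᵥ w with hz
    have hLw : L *ᵥ w = ρ • (Dm *ᵥ (Pm *ᵥ z)) := by
      rw [hL, Matrix.smul_mulVec, ← Matrix.mulVec_mulVec, ← Matrix.mulVec_mulVec, ← hz]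
    have hμw : μ * (w ⬝ᵥ w) = ρ ^ 2 * ((Dm *ᵥ (Pm *ᵥ z)) ⬝ᵥ (Dm *ᵥ (Pm *ᵥ z))) := by
      have h1 := dot_sandwich L w
      have h2 : (Lᵀ * L) *ᵥ w = μ • w := by
        calc (Lᵀ * L) *ᵥ w = Lᵀ *ᵥ ((L * Lᵀ) *ᵥ v) := by
              rw [hwdef, Matrix.mulVec_mulVec, Matrix.mulVec_mulVec, Matrix.mul_assoc]
          _ = μ • w := by rw [hv, Matrix.mulVec_smul, hwdef]
      rw [h2, smul_dotProduct, smul_eq_mul] at h1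
      rw [h1, hLw, hsmulsq]
    -- step 1 : diagonal bound
    set t : Fin N → ℝ := Pm *ᵥ z with ht
    have hstep1 : (τ + δmax)⁻¹ * (t ⬝ᵥ t) ≤ (Dm *ᵥ t) ⬝ᵥ (Dm *ᵥ t) := by
      rw [hdiag t]
      unfold dotProduct
      rw [Finset.mul_sum]
      refine Finset.sum_le_sum fun i _ => ?_
      have h1 : (τ + δmax)⁻¹ ≤ (d i)⁻¹ := by
        apply inv_anti₀ (hdpos i) (hd i).2
      exact mul_le_mul_of_nonneg_right h1 (mul_self_nonneg _)
    -- step 2 : t⬝t ≥ lamKP z⬝z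
    have hstep2 : lamKP * (z ⬝ᵥ z) ≤ t ⬝ᵥ t := by
      have := quad_ge hPP (fun ν hν => hlamKP.2 hν) z
      rwa [dot_sandwich Pm z, ← ht] at this
    -- step 3 : z⬝z ≥ lamKB w⬝w
    have hstep3 : lamKB * (w ⬝ᵥ w) ≤ z ⬝ᵥ z := by
      have hza : z = ρ • ((Bᵀ * B) *ᵥ a) := by
        rw [hz, hw, Matrix.mulVec_smul, Matrix.mulVec_mulVec]
      have hq := quad_sq_ge hBB hlamKBpos.le (fun ν hν => hlamKB.2 hν) a
      have hwa : w ⬝ᵥ w = ρ ^ 2 * ((Bᵀ * B) *ᵥ a ⬝ᵥ a) := by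
        rw [hw, hsmulsq, dot_sandwich B a]
      calc lamKB * (w ⬝ᵥ w) = ρ ^ 2 * (lamKB * ((Bᵀ * B) *ᵥ a ⬝ᵥ a)) := by rw [hwa]; ring
        _ ≤ ρ ^ 2 * (((Bᵀ * B) *ᵥ a) ⬝ᵥ ((Bᵀ * B) *ᵥ a)) :=
            mul_le_mul_of_nonneg_left hq (sq_nonneg ρ)
        _ = z ⬝ᵥ z := by rw [hza, hsmulsq]
    -- combine
    have hcomb : ρ ^ 2 * ((τ + δmax)⁻¹ * (lamKP * (lamKB * (w ⬝ᵥ w)))) ≤ μ * (w ⬝ᵥ w) := by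
      rw [hμw]
      have c1 : lamKB * (w ⬝ᵥ w) ≤ z ⬝ᵥ z := hstep3
      have c2 : lamKP * (lamKB * (w ⬝ᵥ w)) ≤ t ⬝ᵥ t :=
        le_trans (mul_le_mul_of_nonneg_left c1 hlamKPpos.le) hstep2
      have c3 : (τ + δmax)⁻¹ * (lamKP * (lamKB * (w ⬝ᵥ w))) ≤ (Dm *ᵥ t) ⬝ᵥ (Dm *ᵥ t) :=
        le_trans (mul_le_mul_of_nonneg_left c2 (inv_nonneg.mpr hτδmax.le)) hstep1
      exact mul_le_mul_of_nonneg_left c3 (sq_nonneg ρ)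
    have hkey : ρ ^ 2 * lamKP * lamKB / (τ + δmax) * (w ⬝ᵥ w) ≤ μ * (w ⬝ᵥ w) := by
      have : ρ ^ 2 * lamKP * lamKB / (τ + δmax) * (w ⬝ᵥ w)
          = ρ ^ 2 * ((τ + δmax)⁻¹ * (lamKP * (lamKB * (w ⬝ᵥ w)))) := by
        rw [div_eq_mul_inv]; ring
      rw [this]; exact hcomb
    exact le_of_mul_le_mul_right hkey hww
  · -- UPPER BOUND
    have hub1B : ∀ ν : ℝ, Module.End.HasEigenvalue (Matrix.toLin' (Bᵀ * B)) ν → ν ≤ lam1B :=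
      fun ν hν => hlam1B.2 hν
    have hubPPt : ∀ ν : ℝ, Module.End.HasEigenvalue (Matrix.toLin' (Pm * Pmᵀ)) ν → ν ≤ lam1P := by
      intro ν hν
      by_cases hν0 : ν = 0
      · rw [hν0]; exact hlam1Ppos.le
      · exact hlam1P.2 (eig_transfer Pm hν0 hν)
    have hstep1 : w ⬝ᵥ w = ρ ^ 2 * ((Bᵀ * B) *ᵥ a ⬝ᵥ a) := by
      rw [hw, hsmulsq, dot_sandwich B a]
    have hstep2 : (Bᵀ * B) *ᵥ a ⬝ᵥ a ≤ lam1B * (a ⬝ᵥ a) := quad_le hBB hub1B a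
    have hstep3 : a ⬝ᵥ a ≤ lam1P * (y ⬝ᵥ y) := by
      have := quad_le hPPt hubPPt y
      have h1 := dot_sandwich Pmᵀ y
      rw [Matrix.transpose_transpose] at h1
      rw [h1, ← ha] at this
      exact this
    have hstep4 : y ⬝ᵥ y ≤ (τ + δmin)⁻¹ * (v ⬝ᵥ v) := by
      rw [hy, hdiag v]
      unfold dotProduct
      rw [Finset.mul_sum]
      refine Finset.sum_le_sum fun i _ => ?_
      have h1 : (d i)⁻¹ ≤ (τ + δmin)⁻¹ := inv_anti₀ hτδmin (hd i).1
      exact mul_le_mul_of_nonneg_right h1 (mul_self_nonneg _)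
    have hcomb : μ * (v ⬝ᵥ v) ≤ ρ ^ 2 * (lam1B * (lam1P * ((τ + δmin)⁻¹ * (v ⬝ᵥ v)))) := by
      rw [hmain, hstep1]
      have c2 : (Bᵀ * B) *ᵥ a ⬝ᵥ a ≤ lam1B * (lam1P * (y ⬝ᵥ y)) :=
        le_trans hstep2 (mul_le_mul_of_nonneg_left hstep3 hlam1Bpos.le)
      have c3 : (Bᵀ * B) *ᵥ a ⬝ᵥ a ≤ lam1B * (lam1P * ((τ + δmin)⁻¹ * (v ⬝ᵥ v))) :=
        le_trans c2 (mul_le_mul_of_nonneg_left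
          (mul_le_mul_of_nonneg_left hstep4 hlam1Ppos.le) hlam1Bpos.le)
      exact mul_le_mul_of_nonneg_left c3 (sq_nonneg ρ)
    have hkey : μ * (v ⬝ᵥ v) ≤ ρ ^ 2 * lam1P * lam1B / (τ + δmin) * (v ⬝ᵥ v) := by
      have : ρ ^ 2 * lam1P * lam1B / (τ + δmin) * (v ⬝ᵥ v)
          = ρ ^ 2 * (lam1B * (lam1P * ((τ + δmin)⁻¹ * (v ⬝ᵥ v)))) := by
        rw [div_eq_mul_inv]; ring
      rw [this]; exact hcomb
    exact le_of_mul_le_mul_right hkey hvv
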